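/- arXiv:1304.0125 — 3 statements merged into one kernel-verified Lean document; each statement's English description precedes it below -/
import Mathlib

section
/- Let A be the adjacency matrix of a finite simple graph G on n vertices and A_d the adjacency matrix of its d-distance graph. If for each k with d ≤ k ≤ n + d − 1 the entry (A^k)_{ij} is a constant f(k) independent of the pair i,j whenever dist(i,j) = d, then G is d-walk regular, i.e., for every k ≥ d the entry (A^k)_{ij} is independent of the pair i,j with dist(i,j) = d. -/
open Matrix

/-- If `(A^k) i j` is independent of the pair `i j` at distance `d` for all
`d ≤ k ≤ n + d - 1`, then this holds for all `k ≥ d`, i.e. `G` is `d`-walk regular. -/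
theorem stmt_1 {n : ℕ} (G : SimpleGraph (Fin n)) [DecidableRel G.Adj] (d : ℕ)
    (hf : ∀ k, d ≤ k → k ≤ n + d - 1 → ∀ i j p q : Fin n,
      G.Reachable i j → G.dist i j = d → i ≠ j →
      G.Reachable p q → G.dist p q = d → p ≠ q →
      (G.adjMatrix ℝ ^ k) i j = (G.adjMatrix ℝ ^ k) p q) :
    ∀ k, d ≤ k → ∀ i j p q : Fin n,
      G.Reachable i j → G.dist i j = d → i ≠ j →
      G.Reachable p q → G.dist p q = d → p ≠ q →
      (G.adjMatrix ℝ ^ k) i j = (G.adjMatrix ℝ ^ k) p q := by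
  intro k
  induction k using Nat.strong_induction_on with
  | _ k ih =>
    intro hk i j p q hij hdij hneij hpq hdpq hnepq
    by_cases hle : k ≤ n + d - 1
    · exact hf k hk hle i j p q hij hdij hneij hpq hdpq hnepq
    · have hn : 0 < n := i.pos
      have hnd : n + d ≤ k := by omega
      set A := G.adjMatrix ℝ with hA
      have hdeg : A.charpoly.natDegree = n := by
        rw [Matrix.charpoly_natDegree_eq_dim]; simp
      have h0 : (Polynomial.aeval A) A.charpoly = 0 := A.aeval_self_charpoly
      rw [Polynomial.aeval_eq_sum_range, hdeg, Finset.sum_range_succ] at h0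
      have hmon : A.charpoly.coeff n = 1 := by
        have hm := A.charpoly_monic
        rw [Polynomial.Monic, Polynomial.leadingCoeff, hdeg] at hm
        exact hm
      rw [hmon, one_smul] at h0
      have hch : A ^ n = ∑ m ∈ Finset.range n, (-(A.charpoly.coeff m)) • A ^ m := by
        have h1 : A ^ n = -∑ m ∈ Finset.range n, A.charpoly.coeff m • A ^ m :=
          eq_neg_of_add_eq_zero_right h0
        rw [h1, ← Finset.sum_neg_distrib]
        exact Finset.sum_congr rfl fun m _ => (neg_smul _ _).symm
      have hk' : A ^ k = ∑ m ∈ Finset.range n, (-(A.charpoly.coeff m)) • A ^ (k - n + m) := by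
        have h2 : A ^ k = A ^ (k - n) * A ^ n := by
          rw [← pow_add]; congr 1; omega
        rw [h2, hch, Finset.mul_sum]
        exact Finset.sum_congr rfl fun m _ => by rw [Matrix.mul_smul, ← pow_add]
      rw [hk']
      simp only [Matrix.sum_apply, Matrix.smul_apply, smul_eq_mul]
      refine Finset.sum_congr rfl fun m hm => ?_
      congr 1
      have hm' := Finset.mem_range.mp hm
      exact ih (k - n + m) (by omega) (by omega) i j p q hij hdij hneij hpq hdpq hnepq
end

section
/- Let G be a d-walk regular graph (d > 0) with adjacency matrix A and d-function f. Then for every vertex i and every k ≥ d, (A^{2k})_{ii} = Σ_s (A^k)_{is}² and the contribution from vertices at distance exactly d from i equals f(k)² · N_i(d), where N_i(d) is the number of vertices at distance d from i. Consequently, if in addition (A^{2k})_{ii} − Σ_{s : dist(i,s) ≠ d} (A^k)_{is}² is independent of i for some k with f(k) ≠ 0, then N_i(d) is independent of i, i.e., the d-distance graph G_d is regular. -/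
open Matrix Finset

lemma aux_sq {n : ℕ} (G : SimpleGraph (Fin n)) [DecidableRel G.Adj] (m : ℕ) (i : Fin n) :
    (G.adjMatrix ℝ ^ (2 * m)) i i = ∑ s, ((G.adjMatrix ℝ ^ m) i s) ^ 2 := by
  have hsymm : (G.adjMatrix ℝ ^ m).IsSymm := (G.isSymm_adjMatrix).pow m
  rw [two_mul, pow_add, Matrix.mul_apply]
  refine Finset.sum_congr rfl fun s _ => ?_
  rw [sq]
  congr 1
  exact (hsymm.apply s i).symm

/-- For a `d`-walk regular graph (`d > 0`) with `d`-function `f`: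
`(A^{2k})_{ii} = Σ_s (A^k)_{is}²`, the contribution of vertices at distance `d` equals
`f k ^ 2 * N_i(d)`, and if the remaining contribution is independent of `i` for some
`k ≥ d` with `f k ≠ 0`, then the `d`-distance graph is regular. -/
theorem stmt_9 {n : ℕ} (G : SimpleGraph (Fin n)) [DecidableRel G.Adj]
    (d : ℕ) (hd : 0 < d) (f : ℕ → ℝ)
    (hf : ∀ k, d ≤ k → ∀ i s, G.Reachable i s → G.dist i s = d →
      (G.adjMatrix ℝ ^ k) i s = f k)
    (k : ℕ) (hk : d ≤ k) (hfk : f k ≠ 0)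
    (hindep : ∀ i j : Fin n,
      (G.adjMatrix ℝ ^ (2 * k)) i i -
        ∑ s ∈ univ.filter (fun s => ¬(G.Reachable i s ∧ G.dist i s = d)),
          ((G.adjMatrix ℝ ^ k) i s) ^ 2 =
      (G.adjMatrix ℝ ^ (2 * k)) j j -
        ∑ s ∈ univ.filter (fun s => ¬(G.Reachable j s ∧ G.dist j s = d)),
          ((G.adjMatrix ℝ ^ k) j s) ^ 2) :
    (∀ m, d ≤ m → ∀ i, (G.adjMatrix ℝ ^ (2 * m)) i i =
      ∑ s, ((G.adjMatrix ℝ ^ m) i s) ^ 2) ∧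
    (∀ m, d ≤ m → ∀ i,
      ∑ s ∈ univ.filter (fun s => G.Reachable i s ∧ G.dist i s = d),
        ((G.adjMatrix ℝ ^ m) i s) ^ 2 =
      f m ^ 2 * (univ.filter (fun s => G.Reachable i s ∧ G.dist i s = d)).card) ∧
    (∀ i j : Fin n,
      (univ.filter (fun s => G.Reachable i s ∧ G.dist i s = d)).card =
      (univ.filter (fun s => G.Reachable j s ∧ G.dist j s = d)).card) := by
  have part2 : ∀ m, d ≤ m → ∀ i,
      ∑ s ∈ univ.filter (fun s => G.Reachable i s ∧ G.dist i s = d),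
        ((G.adjMatrix ℝ ^ m) i s) ^ 2 =
      f m ^ 2 * (univ.filter (fun s => G.Reachable i s ∧ G.dist i s = d)).card := by
    intro m hm i
    rw [Finset.sum_congr rfl (fun s hs => ?_), Finset.sum_const, nsmul_eq_mul, mul_comm]
    simp only [Finset.mem_filter] at hs
    rw [hf m hm i s hs.2.1 hs.2.2]
  refine ⟨fun m _ i => aux_sq G m i, part2, fun i j => ?_⟩
  have key : ∀ i : Fin n,
      (G.adjMatrix ℝ ^ (2 * k)) i i -
        ∑ s ∈ univ.filter (fun s => ¬(G.Reachable i s ∧ G.dist i s = d)),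
          ((G.adjMatrix ℝ ^ k) i s) ^ 2 =
      f k ^ 2 * (univ.filter (fun s => G.Reachable i s ∧ G.dist i s = d)).card := by
    intro i
    rw [aux_sq G k i, ← part2 k hk i,
      ← Finset.sum_filter_add_sum_filter_not univ (fun s => G.Reachable i s ∧ G.dist i s = d)
        (fun s => ((G.adjMatrix ℝ ^ k) i s) ^ 2)]
    ring
  have h := hindep i j
  rw [key i, key j] at h
  have := mul_left_cancel₀ (pow_ne_zero 2 hfk) h
  exact_mod_cast this
end

section
/- A regular graph G is 1-walk regular if and only if its line graph L(G) is 0-walk regular, in the sense that the number of closed walks of each length k at a vertex of L(G) corresponding to edge {u,v} of G is determined by the numbers of walks in G and is independent of the edge when and only when (A^k)_{uv} is independent of the edge {u,v} for all k ≥ 1. Formally: for a k-regular graph G with adjacency matrix A and line graph adjacency matrix A_L = B^T B − 2I (B the incidence matrix), the diagonal of A_L^m is constant for all m if and only if (A^k)_{uv} is constant over edges {u,v} for all k ≥ 1. -/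
open Matrix Finset

/-- diag-difference of a sandwiched matrix, as a linear map. -/
private def sandDiff {ι κ : Type*} [Fintype ι] [Fintype κ]
    (P : Matrix κ ι ℝ) (Q : Matrix ι κ ℝ) (i j : κ) : Matrix ι ι ℝ →ₗ[ℝ] ℝ where
  toFun M := (P * M * Q) i i - (P * M * Q) j j
  map_add' M N := by simp [Matrix.mul_add, Matrix.add_mul, Matrix.add_apply]; ring
  map_smul' a M := by simp [Matrix.mul_smul, Matrix.smul_mul, Matrix.smul_apply, smul_eq_mul]; ring

private theorem aux_binom_dir {ι : Type*} [Fintype ι] [DecidableEq ι]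
    (X : Matrix ι ι ℝ) (c : ℝ) (φ : Matrix ι ι ℝ →ₗ[ℝ] ℝ)
    (h : ∀ m, φ ((X + c • 1) ^ m) = 0) : ∀ m, φ (X ^ m) = 0 := by
  have hcomm : Commute X (c • (1 : Matrix ι ι ℝ)) := (Commute.one_right X).smul_right c
  have hexp : ∀ m, (X + c • (1 : Matrix ι ι ℝ)) ^ m
      = ∑ k ∈ range (m + 1), (c ^ (m - k) * (m.choose k : ℝ)) • X ^ k := by
    intro m
    rw [hcomm.add_pow]
    refine Finset.sum_congr rfl fun k _ => ?_
    rw [smul_pow, one_pow, mul_smul_comm, mul_one,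
      ← (Nat.cast_commute (m.choose k) (c ^ (m - k) • X ^ k)).eq, ← nsmul_eq_mul,
      ← Nat.cast_smul_eq_nsmul ℝ, smul_smul, mul_comm]
  have h' : ∀ m, ∑ k ∈ range (m + 1), (c ^ (m - k) * (m.choose k : ℝ)) * φ (X ^ k) = 0 := by
    intro m
    have := h m
    rw [hexp, map_sum] at this
    simpa only [_root_.map_smul, smul_eq_mul] using this
  intro m
  induction m using Nat.strong_induction_on with
  | _ m ih =>
    have := h' m
    rw [Finset.sum_range_succ] at this
    simp only [Nat.sub_self, pow_zero, Nat.choose_self, Nat.cast_one, one_mul] at this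
    rw [Finset.sum_eq_zero (fun k hk => by
      rw [ih k (Finset.mem_range.mp hk), mul_zero]), zero_add] at this
    exact this

private theorem aux_binom {ι : Type*} [Fintype ι] [DecidableEq ι]
    (X : Matrix ι ι ℝ) (c : ℝ) (φ : Matrix ι ι ℝ →ₗ[ℝ] ℝ) :
    (∀ m, φ ((X + c • 1) ^ m) = 0) ↔ (∀ m, φ (X ^ m) = 0) := by
  constructor
  · exact aux_binom_dir X c φ
  · intro h
    have hX : X + c • (1 : Matrix ι ι ℝ) + (-c) • 1 = X := by
      rw [add_assoc, ← add_smul]; simp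
    exact aux_binom_dir (X + c • 1) (-c) φ (by rw [hX]; exact h)

/-- A regular graph `G` is `1`-walk regular iff its line graph is `0`-walk regular:
with incidence matrix `B` (restricted to the edge set) and line-graph adjacency
matrix `A_L = Bᵀ * B - 2 • 1`, the diagonal of `A_L ^ m` is constant for all `m`
iff `(A^k) u v` is constant over edges `{u, v}` of `G` for all `k ≥ 1`. -/
theorem stmt_17 {n : ℕ} (G : SimpleGraph (Fin n)) [DecidableRel G.Adj]
    (r : ℕ) (hreg : G.IsRegularOfDegree r)
    (B : Matrix (Fin n) G.edgeSet ℝ)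
    (hB : ∀ (v : Fin n) (e : G.edgeSet), B v e = G.incMatrix ℝ v (e : Sym2 (Fin n)))
    (AL : Matrix G.edgeSet G.edgeSet ℝ)
    (hAL : AL = Bᵀ * B - 2 • (1 : Matrix G.edgeSet G.edgeSet ℝ)) :
    (∀ (m : ℕ) (e e' : G.edgeSet), (AL ^ m) e e = (AL ^ m) e' e') ↔
    (∀ k : ℕ, 1 ≤ k → ∀ u v p q : Fin n, G.Adj u v → G.Adj p q →
      (G.adjMatrix ℝ ^ k) u v = (G.adjMatrix ℝ ^ k) p q) := by
  classical
  set A : Matrix (Fin n) (Fin n) ℝ := G.adjMatrix ℝ with hAdef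
  -- basic symmetry of powers of A
  have hsym : ∀ (m : ℕ) (x y : Fin n), (A ^ m) x y = (A ^ m) y x := by
    intro m x y
    have h2 : ((A ^ m)ᵀ) y x = (A ^ m) y x :=
      congrFun (congrFun ((G.isSymm_adjMatrix (α := ℝ)).pow m) y) x
    rw [Matrix.transpose_apply] at h2
    exact h2
  -- B * Bᵀ = A + r • 1
  have hBBt : B * Bᵀ = A + (r : ℝ) • 1 := by
    ext u v
    have key : (B * Bᵀ) u v = (G.incMatrix ℝ * (G.incMatrix ℝ)ᵀ) u v := by
      simp only [Matrix.mul_apply, transpose_apply, hB]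
      have htr : ∑ e : G.edgeSet, G.incMatrix ℝ u e * G.incMatrix ℝ v e
          = ∑ e ∈ G.edgeFinset, G.incMatrix ℝ u e * G.incMatrix ℝ v e :=
        (Finset.sum_subtype G.edgeFinset (fun e => SimpleGraph.mem_edgeFinset)
          (fun e => G.incMatrix ℝ u e * G.incMatrix ℝ v e)).symm
      rw [htr]
      refine Finset.sum_subset (Finset.subset_univ _) ?_
      intro e _ he
      rw [G.incMatrix_of_notMem_incidenceSet fun hc => he (SimpleGraph.mem_edgeFinset.mpr hc.1),
        zero_mul]
    rw [key, G.incMatrix_mul_transpose]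
    by_cases h : u = v
    · subst h
      simp [hreg u, Matrix.one_apply, hAdef]
    · simp [h, Matrix.one_apply, SimpleGraph.adjMatrix, hAdef]
  -- evaluation of sandwiched entries
  have heval : ∀ (M : Matrix (Fin n) (Fin n) ℝ) (e : G.edgeSet) (u v : Fin n),
      (e : Sym2 (Fin n)) = s(u, v) →
      (Bᵀ * M * B) e e = M u u + M u v + M v u + M v v := by
    intro M e u v he
    have hadj : G.Adj u v := by rw [← SimpleGraph.mem_edgeSet, ← he]; exact e.2
    have huv : u ≠ v := hadj.ne
    have hBval : ∀ x, B x e = (if x = u then (1:ℝ) else 0) + (if x = v then 1 else 0) := by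
      intro x
      rw [hB]
      by_cases hx : x ∈ (e : Sym2 (Fin n))
      · rw [G.incMatrix_of_mem_incidenceSet ⟨e.2, hx⟩]
        rw [he, Sym2.mem_iff] at hx
        rcases hx with h | h <;> subst h <;> simp [huv, huv.symm]
      · rw [G.incMatrix_of_notMem_incidenceSet fun hc => hx hc.2]
        rw [he, Sym2.mem_iff, not_or] at hx
        simp [hx.1, hx.2]
    simp only [Matrix.mul_apply, transpose_apply, hBval, Finset.sum_mul, Finset.mul_sum,
      add_mul, mul_add, ite_mul, mul_ite, one_mul, mul_one, zero_mul, mul_zero,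
      Finset.sum_add_distrib, Finset.sum_ite_eq, Finset.sum_ite_eq', Finset.mem_univ, if_true]
    ring
  -- power shift
  have hshift : ∀ j : ℕ, (Bᵀ * B) ^ (j + 1) = Bᵀ * (B * Bᵀ) ^ j * B := by
    intro j
    induction j with
    | zero => simp
    | succ j ih =>
      rw [pow_succ, ih, pow_succ]
      simp only [Matrix.mul_assoc]
  -- Bᵀ B = AL + 2 • 1 with real smul
  have hBtB : Bᵀ * B = AL + (2 : ℝ) • 1 := by
    have h2s : (2 : ℕ) • (1 : Matrix G.edgeSet G.edgeSet ℝ) = (2 : ℝ) • 1 := by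
      rw [← Nat.cast_smul_eq_nsmul ℝ]; norm_num
    rw [hAL, h2s]
    abel
  -- diag formula for sandDiff 1 1
  have hφ : ∀ (e e' : G.edgeSet) (M : Matrix G.edgeSet G.edgeSet ℝ),
      sandDiff 1 1 e e' M = M e e - M e' e' := by
    intro e e' M
    simp [sandDiff]
  have hψ : ∀ (e e' : G.edgeSet) (M : Matrix (Fin n) (Fin n) ℝ),
      sandDiff Bᵀ B e e' M = (Bᵀ * M * B) e e - (Bᵀ * M * B) e' e' := fun _ _ _ => rfl
  -- step 1 : diag of AL powers constant ↔ diag of (BᵀB) powers constant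
  have h12 : (∀ (m : ℕ) (e e' : G.edgeSet), (AL ^ m) e e = (AL ^ m) e' e') ↔
      (∀ (e e' : G.edgeSet) (m : ℕ), ((Bᵀ * B) ^ m) e e = ((Bᵀ * B) ^ m) e' e') := by
    constructor
    · intro h e e' m
      have h0 : ∀ m, sandDiff 1 1 e e' (AL ^ m) = 0 := fun m => by
        rw [hφ, h m e e', sub_self]
      have := (aux_binom AL 2 (sandDiff 1 1 e e')).mpr h0 m
      rw [← hBtB, hφ] at this
      linarith
    · intro h m e e'
      have h0 : ∀ m, sandDiff 1 1 e e' ((AL + (2:ℝ) • 1) ^ m) = 0 := fun m => by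
        rw [← hBtB, hφ, h e e' m, sub_self]
      have := aux_binom_dir AL 2 (sandDiff 1 1 e e') h0 m
      rw [hφ] at this
      linarith
  -- step 2 : ↔ sandwiched A-powers constant
  have h24 : (∀ (e e' : G.edgeSet) (m : ℕ), ((Bᵀ * B) ^ m) e e = ((Bᵀ * B) ^ m) e' e') ↔
      (∀ (e e' : G.edgeSet) (k : ℕ),
        (Bᵀ * A ^ k * B) e e = (Bᵀ * A ^ k * B) e' e') := by
    constructor
    · intro h e e' k
      have h0 : ∀ j, sandDiff Bᵀ B e e' ((A + (r:ℝ) • 1) ^ j) = 0 := fun j => by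
        have := h e e' (j + 1)
        rw [hshift, hBBt] at this
        rw [hψ, this, sub_self]
      have := aux_binom_dir A r (sandDiff Bᵀ B e e') h0 k
      rw [hψ] at this
      linarith
    · intro h e e' m
      match m with
      | 0 => simp [Matrix.one_apply]
      | (j + 1) =>
        have h0 : ∀ k, sandDiff Bᵀ B e e' (A ^ k) = 0 := fun k => by
          rw [hψ, h e e' k, sub_self]
        have := (aux_binom A r (sandDiff Bᵀ B e e')).mpr h0 j
        rw [hψ] at this
        rw [hshift, hBBt]
        linarith
  -- step 3 : ↔ 1-walk regularity
  have h4R : (∀ (e e' : G.edgeSet) (k : ℕ),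
      (Bᵀ * A ^ k * B) e e = (Bᵀ * A ^ k * B) e' e') ↔
      (∀ k : ℕ, 1 ≤ k → ∀ u v p q : Fin n, G.Adj u v → G.Adj p q →
        (A ^ k) u v = (A ^ k) p q) := by
    constructor
    · intro h k hk
      induction k, hk using Nat.le_induction with
      | base =>
        intro u v p q huv hpq
        simp [pow_one, hAdef, huv, hpq]
      | succ k hk ih =>
        intro u v p q huv hpq
        have diag : ∀ x y : Fin n, G.Adj x y →
            (A ^ (k + 1)) x x = r * (A ^ k) p q := by
          intro x y hxy
          rw [pow_succ', SimpleGraph.adjMatrix_mul_apply,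
            Finset.sum_congr rfl (fun w hw =>
              ih w x p q ((G.mem_neighborFinset x w).mp hw).symm hpq),
            Finset.sum_const]
          have hc : (G.neighborFinset x).card = r := hreg x
          rw [hc, nsmul_eq_mul]
        have he := h ⟨s(u, v), G.mem_edgeSet.mpr huv⟩ ⟨s(p, q), G.mem_edgeSet.mpr hpq⟩ (k + 1)
        rw [heval _ _ u v rfl, heval _ _ p q rfl, diag u v huv, diag v u huv.symm,
          diag p q hpq, diag q p hpq.symm, hsym (k + 1) v u, hsym (k + 1) q p] at he
        linarith
    · intro h e e' k
      obtain ⟨u, v, hev⟩ : ∃ u v : Fin n, (e : Sym2 (Fin n)) = s(u, v) := by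
        induction (e : Sym2 (Fin n)) using Sym2.ind with
        | _ x y => exact ⟨x, y, rfl⟩
      obtain ⟨p, q, hev'⟩ : ∃ p q : Fin n, (e' : Sym2 (Fin n)) = s(p, q) := by
        induction (e' : Sym2 (Fin n)) using Sym2.ind with
        | _ x y => exact ⟨x, y, rfl⟩
      have huv : G.Adj u v := by rw [← SimpleGraph.mem_edgeSet, ← hev]; exact e.2
      have hpq : G.Adj p q := by rw [← SimpleGraph.mem_edgeSet, ← hev']; exact e'.2
      rw [heval _ _ u v hev, heval _ _ p q hev']
      match k with
      | 0 => simp [Matrix.one_apply, huv.ne, hpq.ne, huv.ne', hpq.ne']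
      | 1 => simp [pow_one, hAdef, huv, hpq, huv.symm, hpq.symm]
      | (j + 2) =>
        have diag : ∀ x y : Fin n, G.Adj x y →
            (A ^ (j + 2)) x x = r * (A ^ (j + 1)) u v := by
          intro x y hxy
          rw [pow_succ', SimpleGraph.adjMatrix_mul_apply,
            Finset.sum_congr rfl (fun w hw =>
              h (j + 1) (by omega) w x u v ((G.mem_neighborFinset x w).mp hw).symm huv),
            Finset.sum_const]
          have hc : (G.neighborFinset x).card = r := hreg x
          rw [hc, nsmul_eq_mul]
        rw [diag u v huv, diag v u huv.symm, diag p q hpq, diag q p hpq.symm,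
          h (j + 2) (by omega) u v p q huv hpq,
          h (j + 2) (by omega) v u q p huv.symm hpq.symm]
  exact h12.trans (h24.trans h4R)
end
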